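/- Suppose √(λ0/λ2) > M and let β* be a minimizer of F over {β ∈ ℝᵖ : ‖β‖∞ ≤ M}. Set r* = y − Xβ*, ρ* = −r*, and μ*_i = (|ρ*ᵀX_i| − λ0/M − λ2·M) if |β*_i| = M and μ*_i = 0 otherwise. Then (ρ*, μ*) is dual-feasible with μ*_i ≥ 0 for all i, h2(ρ, μ) ≤ h2(ρ*, μ*) for all dual-feasible pairs (ρ, μ), and h2(ρ*, μ*) = F(β*). -/

import Mathlib

/-- The reverse Huber function: `B(t) = |t|` for `|t| ≤ 1` and `B(t) = (t² + 1)/2` otherwise. -/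
noncomputable def revHuber (t : ℝ) : ℝ := if |t| ≤ 1 then |t| else (t ^ 2 + 1) / 2

/-- The penalty `ψ(β; λ0, λ2, M)`. -/
noncomputable def psi (l0 l2 M b : ℝ) : ℝ :=
  if Real.sqrt (l0 / l2) ≤ M then 2 * l0 * revHuber (b * Real.sqrt (l2 / l0))
  else (l0 / M + l2 * M) * |b|

/-- The objective `F(β)` of the reduced perspective relaxation. -/
noncomputable def Fobj (n p : ℕ) (X : Matrix (Fin n) (Fin p) ℝ) (y : Fin n → ℝ)
    (l0 l2 M : ℝ) (β : Fin p → ℝ) : ℝ :=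
  (1 / 2) * ∑ j, (y j - ∑ i, X j i * β i) ^ 2 + ∑ i, psi l0 l2 M (β i)

/-- The dual objective `h2(ρ, μ) = −(1/2)‖ρ‖² − ρᵀy − M‖μ‖₁`. -/
noncomputable def h2 (n p : ℕ) (y : Fin n → ℝ) (M : ℝ)
    (ρ : Fin n → ℝ) (μ : Fin p → ℝ) : ℝ :=
  -(1 / 2) * ∑ j, (ρ j) ^ 2 - ∑ j, ρ j * y j - M * ∑ i, |μ i|

/-- Dual feasibility: `|ρᵀXᵢ| − μᵢ ≤ λ0/M + λ2 M` for all `i`. -/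
def dualFeasible (n p : ℕ) (X : Matrix (Fin n) (Fin p) ℝ)
    (l0 l2 M : ℝ) (ρ : Fin n → ℝ) (μ : Fin p → ℝ) : Prop :=
  ∀ i, |∑ j, ρ j * X j i| - μ i ≤ l0 / M + l2 * M

lemma limit_le {s lam a : ℝ} (ha : 0 ≤ a) {e0 : ℝ} (he0 : 0 < e0)
    (h : ∀ e : ℝ, 0 < e → e ≤ e0 → lam ≤ s + e * a / 2) : lam ≤ s := by
  by_contra hc
  push_neg at hc
  set e := min e0 ((lam - s) / (a + 1)) with he
  have ha1 : (0:ℝ) < a + 1 := by linarith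
  have hepos : 0 < e := lt_min he0 (div_pos (by linarith) ha1)
  have h1 := h e hepos (min_le_left _ _)
  have h2 : e ≤ (lam - s) / (a + 1) := min_le_right _ _
  have h3 : e * (a + 1) ≤ lam - s := by
    rw [← le_div_iff₀ ha1]
    exact h2
  nlinarith

lemma perturb (n p : ℕ) (X : Matrix (Fin n) (Fin p) ℝ) (y : Fin n → ℝ)
    (l0 l2 M : ℝ) (hcase : M < Real.sqrt (l0 / l2))
    (βs : Fin p → ℝ) (hβs : ∀ i, |βs i| ≤ M)
    (hmin : ∀ β : Fin p → ℝ, (∀ i, |β i| ≤ M) → Fobj n p X y l0 l2 M βs ≤ Fobj n p X y l0 l2 M β)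
    (i : Fin p) (δ : ℝ) (hδ : |βs i + δ| ≤ M) :
    0 ≤ -(δ * ∑ j, (y j - ∑ i', X j i' * βs i') * X j i)
        + δ ^ 2 * (∑ j, (X j i) ^ 2) / 2
        + (l0 / M + l2 * M) * (|βs i + δ| - |βs i|) := by
  set lam := l0 / M + l2 * M with hlam
  have hpsi : ∀ b : ℝ, psi l0 l2 M b = lam * |b| := fun b => if_neg (not_le.mpr hcase)
  set β' := Function.update βs i (βs i + δ) with hβ'
  have hfeas : ∀ i', |β' i'| ≤ M := by
    intro i'
    by_cases h : i' = i
    · subst h; simpa [hβ'] using hδ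
    · simpa [hβ', Function.update_of_ne h] using hβs i'
  have hkey := hmin β' hfeas
  have hsum : ∀ j, ∑ i', X j i' * β' i' = (∑ i', X j i' * βs i') + X j i * δ := by
    intro j
    have : ∀ i' ∈ Finset.univ, X j i' * β' i'
        = X j i' * βs i' + (if i' = i then X j i * δ else 0) := by
      intro i' _
      by_cases h : i' = i
      · subst h; simp [hβ']; ring
      · rw [if_neg h]; simp [hβ', Function.update_of_ne h]
    rw [Finset.sum_congr rfl this, Finset.sum_add_distrib, Finset.sum_ite_eq' Finset.univ i]
    simp
  have hpsisum : ∑ i', psi l0 l2 M (β' i')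
      = (∑ i', psi l0 l2 M (βs i')) + (lam * |βs i + δ| - lam * |βs i|) := by
    have : ∀ i' ∈ Finset.univ, psi l0 l2 M (β' i')
        = psi l0 l2 M (βs i') + (if i' = i then lam * |βs i + δ| - lam * |βs i| else 0) := by
      intro i' _
      by_cases h : i' = i
      · subst h; simp [hβ', hpsi]
      · rw [if_neg h]; simp [hβ', Function.update_of_ne h]
    rw [Finset.sum_congr rfl this, Finset.sum_add_distrib, Finset.sum_ite_eq' Finset.univ i]
    simp
  have hquad : ∑ j, (y j - ∑ i', X j i' * β' i') ^ 2
      = (∑ j, (y j - ∑ i', X j i' * βs i') ^ 2)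
        - 2 * (δ * ∑ j, (y j - ∑ i', X j i' * βs i') * X j i)
        + δ ^ 2 * ∑ j, (X j i) ^ 2 := by
    have : ∀ j ∈ Finset.univ, (y j - ∑ i', X j i' * β' i') ^ 2
        = (y j - ∑ i', X j i' * βs i') ^ 2
          - 2 * (δ * ((y j - ∑ i', X j i' * βs i') * X j i))
          + δ ^ 2 * (X j i) ^ 2 := by
      intro j _
      rw [hsum j]; ring
    rw [Finset.sum_congr rfl this]
    rw [Finset.sum_add_distrib, Finset.sum_sub_distrib, ← Finset.mul_sum, ← Finset.mul_sum,
      ← Finset.mul_sum]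
  unfold Fobj at hkey
  rw [hquad, hpsisum] at hkey
  linarith

lemma kkt (n p : ℕ) (X : Matrix (Fin n) (Fin p) ℝ) (y : Fin n → ℝ)
    (l0 l2 M : ℝ) (hl0 : 0 < l0) (hl2 : 0 < l2) (hM : 0 < M)
    (hcase : M < Real.sqrt (l0 / l2))
    (βs : Fin p → ℝ) (hβs : ∀ i, |βs i| ≤ M)
    (hmin : ∀ β : Fin p → ℝ, (∀ i, |β i| ≤ M) → Fobj n p X y l0 l2 M βs ≤ Fobj n p X y l0 l2 M β)
    (i : Fin p) :
    (|βs i| = M → (l0 / M + l2 * M) ≤ |∑ j, (y j - ∑ i', X j i' * βs i') * X j i| ∧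
      βs i * (∑ j, (y j - ∑ i', X j i' * βs i') * X j i)
        = M * |∑ j, (y j - ∑ i', X j i' * βs i') * X j i|) ∧
    (|βs i| ≠ M → |∑ j, (y j - ∑ i', X j i' * βs i') * X j i| ≤ l0 / M + l2 * M ∧
      βs i * (∑ j, (y j - ∑ i', X j i' * βs i') * X j i)
        = (l0 / M + l2 * M) * |βs i|) := by
  set lam := l0 / M + l2 * M with hlamdef
  have hlam : 0 < lam := by
    have : 0 < l0 / M := div_pos hl0 hM
    have : 0 < l2 * M := mul_pos hl2 hM
    rw [hlamdef]; positivity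
  set s := ∑ j, (y j - ∑ i', X j i' * βs i') * X j i with hs
  set a := ∑ j, (X j i) ^ 2 with ha
  have ha0 : 0 ≤ a := Finset.sum_nonneg fun j _ => sq_nonneg _
  have hpert : ∀ δ : ℝ, |βs i + δ| ≤ M →
      0 ≤ -(δ * s) + δ ^ 2 * a / 2 + lam * (|βs i + δ| - |βs i|) :=
    fun δ hδ => perturb n p X y l0 l2 M hcase βs hβs hmin i δ hδ
  clear_value lam s a
  constructor
  · intro hbM
    rcases (abs_eq hM.le).mp hbM with hb | hb
    · -- βs i = M, show lam ≤ s
      have hls : lam ≤ s := by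
        apply limit_le ha0 hM
        intro e he heM
        have h1 := hpert (-e) (by rw [hb, abs_of_nonneg (by linarith : (0:ℝ) ≤ M + -e)]; linarith)
        rw [hb, abs_of_nonneg (by linarith : (0:ℝ) ≤ M + -e), abs_of_nonneg hM.le] at h1
        have h2 : e * lam ≤ e * (s + e * a / 2) := by nlinarith
        exact (mul_le_mul_iff_right₀ he).mp h2
      have habs : |s| = s := abs_of_nonneg (by linarith)
      exact ⟨by rw [habs]; exact hls, by rw [habs, hb]⟩
    · -- βs i = -M, show s ≤ -lam
      have hls : lam ≤ -s := by
        apply limit_le ha0 hM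
        intro e he heM
        have h1 := hpert e (by rw [hb]; rw [abs_of_nonpos (by linarith : -M + e ≤ 0)]; linarith)
        rw [hb, abs_of_nonpos (by linarith : -M + e ≤ 0), abs_of_nonpos (by linarith : -M ≤ (0:ℝ))] at h1
        have h2 : e * lam ≤ e * (-s + e * a / 2) := by nlinarith
        exact (mul_le_mul_iff_right₀ he).mp h2
      have habs : |s| = -s := abs_of_nonpos (by linarith)
      exact ⟨by rw [habs]; exact hls, by rw [habs, hb]; ring⟩
  · intro hbM
    have hblt : |βs i| < M := lt_of_le_of_ne (hβs i) hbM
    have hb0 : 0 < M - |βs i| := by linarith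
    have hup : s ≤ lam := by
      apply limit_le ha0 hb0
      intro e he heM
      have h1 := hpert e (by
        calc |βs i + e| ≤ |βs i| + |e| := abs_add_le _ _
        _ = |βs i| + e := by rw [abs_of_pos he]
        _ ≤ M := by linarith)
      have h2 : |βs i + e| - |βs i| ≤ e := by
        have := abs_add_le (βs i) e
        rw [abs_of_pos he] at this
        linarith
      have h4 : lam * (|βs i + e| - |βs i|) ≤ lam * e := mul_le_mul_of_nonneg_left h2 hlam.le
      have h3 : e * s ≤ e * (lam + e * a / 2) := by nlinarith [h4]
      exact (mul_le_mul_iff_right₀ he).mp h3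
    have hdown : -s ≤ lam := by
      apply limit_le ha0 hb0
      intro e he heM
      have h1 := hpert (-e) (by
        calc |βs i + -e| ≤ |βs i| + |-e| := abs_add_le _ _
        _ = |βs i| + e := by rw [abs_neg, abs_of_pos he]
        _ ≤ M := by linarith)
      have h2 : |βs i + -e| - |βs i| ≤ e := by
        have := abs_add_le (βs i) (-e)
        rw [abs_neg, abs_of_pos he] at this
        linarith
      have h4 : lam * (|βs i + -e| - |βs i|) ≤ lam * e := mul_le_mul_of_nonneg_left h2 hlam.le
      have h3 : e * (-s) ≤ e * (lam + e * a / 2) := by nlinarith [h4]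
      exact (mul_le_mul_iff_right₀ he).mp h3
    refine ⟨abs_le.mpr ⟨by linarith, hup⟩, ?_⟩
    rcases lt_trichotomy (βs i) 0 with hb | hb | hb
    · -- βs i < 0 : show lam ≤ -s
      have hls : lam ≤ -s := by
        apply limit_le ha0 (by linarith : (0:ℝ) < -βs i)
        intro e he heM
        have h1 := hpert e (by
          rw [abs_of_nonpos (by linarith : βs i + e ≤ 0)]
          have := abs_of_neg hb
          linarith [hβs i, neg_le_abs (βs i)])
        rw [abs_of_nonpos (by linarith : βs i + e ≤ 0), abs_of_neg hb] at h1
        have h2 : e * lam ≤ e * (-s + e * a / 2) := by nlinarith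
        exact (mul_le_mul_iff_right₀ he).mp h2
      have : s = -lam := by linarith
      rw [this, abs_of_neg hb]; ring
    · simp [hb]
    · -- βs i > 0 : show lam ≤ s
      have hls : lam ≤ s := by
        apply limit_le ha0 hb
        intro e he heM
        have h1 := hpert (-e) (by
          rw [abs_of_nonneg (by linarith : 0 ≤ βs i + -e)]
          have := abs_of_pos hb
          linarith [hβs i])
        rw [abs_of_nonneg (by linarith : 0 ≤ βs i + -e), abs_of_pos hb] at h1
        have h2 : e * lam ≤ e * (s + e * a / 2) := by nlinarith
        exact (mul_le_mul_iff_right₀ he).mp h2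
      have : s = lam := by linarith
      rw [this, abs_of_pos hb]; ring

theorem dual_optimal_case_gt
    (n p : ℕ) (X : Matrix (Fin n) (Fin p) ℝ) (y : Fin n → ℝ)
    (l0 l2 M : ℝ) (hl0 : 0 < l0) (hl2 : 0 < l2) (hM : 0 < M)
    (hcase : M < Real.sqrt (l0 / l2))
    (βs : Fin p → ℝ) (hβs : ∀ i, |βs i| ≤ M)
    (hmin : ∀ β : Fin p → ℝ, (∀ i, |β i| ≤ M) → Fobj n p X y l0 l2 M βs ≤ Fobj n p X y l0 l2 M β)
    (ρs : Fin n → ℝ) (hρs : ρs = fun j => -(y j - ∑ i, X j i * βs i))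
    (μs : Fin p → ℝ)
    (hμs : ∀ i, μs i =
      if |βs i| = M then |∑ j, ρs j * X j i| - l0 / M - l2 * M else 0) :
    (∀ i, 0 ≤ μs i) ∧
      dualFeasible n p X l0 l2 M ρs μs ∧
      (∀ (ρ : Fin n → ℝ) (μ : Fin p → ℝ), dualFeasible n p X l0 l2 M ρ μ →
        h2 n p y M ρ μ ≤ h2 n p y M ρs μs) ∧
      h2 n p y M ρs μs = Fobj n p X y l0 l2 M βs := by
  have hlam : 0 < l0 / M + l2 * M := by
    have h1 : 0 < l0 / M := div_pos hl0 hM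
    have h2 : 0 < l2 * M := mul_pos hl2 hM
    linarith
  have hpsi : ∀ b : ℝ, psi l0 l2 M b = (l0 / M + l2 * M) * |b| :=
    fun b => if_neg (not_le.mpr hcase)
  have hc : ∀ i : Fin p, (∑ j, ρs j * X j i)
      = -(∑ j, (y j - ∑ i', X j i' * βs i') * X j i) := by
    intro i
    rw [← Finset.sum_neg_distrib]
    exact Finset.sum_congr rfl fun j _ => by rw [hρs]; ring
  have hK := fun i => kkt n p X y l0 l2 M hl0 hl2 hM hcase βs hβs hmin i
  have key : ∀ i : Fin p, 0 ≤ μs i ∧ |∑ j, ρs j * X j i| - μs i ≤ l0 / M + l2 * M ∧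
      βs i * (∑ j, (y j - ∑ i', X j i' * βs i') * X j i)
        = (l0 / M + l2 * M) * |βs i| + M * μs i := by
    intro i
    have habs : |∑ j, ρs j * X j i| = |∑ j, (y j - ∑ i', X j i' * βs i') * X j i| := by
      rw [hc i, abs_neg]
    by_cases hbM : |βs i| = M
    · have hμ : μs i = |∑ j, (y j - ∑ i', X j i' * βs i') * X j i| - (l0 / M + l2 * M) := by
        rw [hμs i, if_pos hbM, habs]; ring
      obtain ⟨h1, h2⟩ := (hK i).1 hbM
      refine ⟨by rw [hμ]; linarith, by rw [habs, hμ]; linarith, ?_⟩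
      rw [hμ, h2, hbM]; ring
    · have hμ : μs i = 0 := by rw [hμs i, if_neg hbM]
      obtain ⟨h1, h2⟩ := (hK i).2 hbM
      exact ⟨le_of_eq hμ.symm, by rw [habs, hμ]; linarith, by rw [hμ, h2]; ring⟩
  have heq : h2 n p y M ρs μs = Fobj n p X y l0 l2 M βs := by
    unfold h2 Fobj
    have h1 : ∑ j, (ρs j) ^ 2 = ∑ j, (y j - ∑ i, X j i * βs i) ^ 2 :=
      Finset.sum_congr rfl fun j _ => by rw [hρs]; ring
    have h2' : ∑ j, ρs j * y j = -∑ j, (y j - ∑ i, X j i * βs i) * y j := by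
      rw [← Finset.sum_neg_distrib]
      exact Finset.sum_congr rfl fun j _ => by rw [hρs]; ring
    have h3 : ∑ i, |μs i| = ∑ i, μs i :=
      Finset.sum_congr rfl fun i _ => abs_of_nonneg (key i).1
    have h4 : ∑ i, psi l0 l2 M (βs i) = (l0 / M + l2 * M) * ∑ i, |βs i| := by
      rw [Finset.mul_sum]
      exact Finset.sum_congr rfl fun i _ => hpsi (βs i)
    have h5 : ∑ j, (y j - ∑ i, X j i * βs i) * y j
        = (∑ j, (y j - ∑ i, X j i * βs i) ^ 2)
          + ((l0 / M + l2 * M) * ∑ i, |βs i| + M * ∑ i, μs i) := by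
      have e1 : ∀ j ∈ Finset.univ, (y j - ∑ i, X j i * βs i) * y j
          = (y j - ∑ i, X j i * βs i) ^ 2
            + ∑ i, (y j - ∑ i', X j i' * βs i') * (X j i * βs i) := by
        intro j _
        rw [← Finset.mul_sum]
        ring
      rw [Finset.sum_congr rfl e1, Finset.sum_add_distrib]
      congr 1
      rw [Finset.sum_comm]
      have e2 : ∀ i ∈ Finset.univ, ∑ j, (y j - ∑ i', X j i' * βs i') * (X j i * βs i)
          = (l0 / M + l2 * M) * |βs i| + M * μs i := by
        intro i _
        have e3 : ∑ j, (y j - ∑ i', X j i' * βs i') * (X j i * βs i)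
            = βs i * ∑ j, (y j - ∑ i', X j i' * βs i') * X j i := by
          rw [Finset.mul_sum]
          exact Finset.sum_congr rfl fun j _ => by ring
        rw [e3, (key i).2.2]
      rw [Finset.sum_congr rfl e2, Finset.sum_add_distrib, ← Finset.mul_sum, ← Finset.mul_sum]
    rw [h1, h2', h3, h4]
    linarith [h5]
  refine ⟨fun i => (key i).1, fun i => (key i).2.1, ?_, heq⟩
  intro ρ μ hfeas
  rw [heq]
  unfold h2 Fobj
  unfold dualFeasible at hfeas
  have hy : ∑ j, ρ j * y j
      = (∑ j, ρ j * (y j - ∑ i, X j i * βs i)) + ∑ i, βs i * ∑ j, ρ j * X j i := by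
    have e1 : ∀ j ∈ Finset.univ, ρ j * y j
        = ρ j * (y j - ∑ i, X j i * βs i) + ∑ i, ρ j * (X j i * βs i) := by
      intro j _
      rw [← Finset.mul_sum]
      ring
    rw [Finset.sum_congr rfl e1, Finset.sum_add_distrib]
    congr 1
    rw [Finset.sum_comm]
    exact Finset.sum_congr rfl fun i _ => by
      rw [Finset.mul_sum]
      exact Finset.sum_congr rfl fun j _ => by ring
  have B1 : 0 ≤ ∑ j, ((y j - ∑ i, X j i * βs i) + ρ j) ^ 2 :=
    Finset.sum_nonneg fun j _ => sq_nonneg _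
  have E1 : ∑ j, ((y j - ∑ i, X j i * βs i) + ρ j) ^ 2
      = (∑ j, (y j - ∑ i, X j i * βs i) ^ 2)
        + 2 * (∑ j, ρ j * (y j - ∑ i, X j i * βs i)) + ∑ j, (ρ j) ^ 2 := by
    have e1 : ∀ j ∈ Finset.univ, ((y j - ∑ i, X j i * βs i) + ρ j) ^ 2
        = (y j - ∑ i, X j i * βs i) ^ 2
          + 2 * (ρ j * (y j - ∑ i, X j i * βs i)) + (ρ j) ^ 2 := by
      intro j _; ring
    rw [Finset.sum_congr rfl e1, Finset.sum_add_distrib, Finset.sum_add_distrib,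
      ← Finset.mul_sum]
  have B2 : 0 ≤ ∑ i, ((l0 / M + l2 * M) * |βs i| + M * |μ i| + βs i * ∑ j, ρ j * X j i) := by
    apply Finset.sum_nonneg
    intro i _
    have hf := hfeas i
    have e1 : |βs i * ∑ j, ρ j * X j i| = |βs i| * |∑ j, ρ j * X j i| := abs_mul _ _
    have e2 : -|βs i * ∑ j, ρ j * X j i| ≤ βs i * ∑ j, ρ j * X j i := neg_abs_le _
    have e3 : |βs i| * |∑ j, ρ j * X j i| ≤ |βs i| * ((l0 / M + l2 * M) + μ i) :=
      mul_le_mul_of_nonneg_left (by linarith) (abs_nonneg _)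
    have e4 : |βs i| * ((l0 / M + l2 * M) + μ i)
        = |βs i| * (l0 / M + l2 * M) + |βs i| * μ i := by ring
    have e5 : |βs i| * μ i ≤ |βs i| * |μ i| :=
      mul_le_mul_of_nonneg_left (le_abs_self _) (abs_nonneg _)
    have e6 : |βs i| * |μ i| ≤ M * |μ i| :=
      mul_le_mul_of_nonneg_right (hβs i) (abs_nonneg _)
    nlinarith [abs_nonneg (βs i), hβs i]
  have E2 : ∑ i, ((l0 / M + l2 * M) * |βs i| + M * |μ i| + βs i * ∑ j, ρ j * X j i)
      = (l0 / M + l2 * M) * (∑ i, |βs i|) + M * (∑ i, |μ i|)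
        + ∑ i, βs i * ∑ j, ρ j * X j i := by
    rw [Finset.sum_add_distrib, Finset.sum_add_distrib, ← Finset.mul_sum, ← Finset.mul_sum]
  have h4 : ∑ i, psi l0 l2 M (βs i) = (l0 / M + l2 * M) * ∑ i, |βs i| := by
    rw [Finset.mul_sum]
    exact Finset.sum_congr rfl fun i _ => hpsi (βs i)
  rw [h4]
  rw [E1] at B1
  rw [E2] at B2
  linarith [hy]
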